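/- arXiv:2205.01596 — 3 statements merged into one kernel-verified Lean document; each statement's English description precedes it below -/
import Mathlib

section
/- Let λ be a partition and Σ_λ its skeleton graph on the boxes of λ. An L-shaped subgraph of Σ_λ is a pair of edges e_1 = {(x,y),(x+1,y)}, e_2 = {(x+1,y),(x+1,y+1)} with all three boxes in λ. Then: (a) distinct L-shaped subgraphs of Σ_λ have disjoint edge sets; and (b) for any choice function selecting one of the two edges of each L-shaped subgraph, the graph obtained from Σ_λ by deleting all selected edges is a spanning tree of Σ_λ (connected and acyclic on all boxes of λ). Consequently there are exactly 2^m such admissible trees, where m is the number of L-shaped subgraphs. -/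
/-- The Young diagram of the partition `λ₁ ≥ ... ≥ λ_ℓ > 0`. -/
def ydiag (l : ℕ) (lam : ℕ → ℕ) : Finset (ℕ × ℕ) :=
  (Finset.Icc 1 l).biUnion fun x => (Finset.Icc 1 (lam x)).image fun y => (x, y)

/-- Two boxes are adjacent if they differ by one in exactly one coordinate. -/
def adjBox (p q : ℕ × ℕ) : Prop :=
  (p.1 = q.1 ∧ (p.2 = q.2 + 1 ∨ q.2 = p.2 + 1)) ∨
  (p.2 = q.2 ∧ (p.1 = q.1 + 1 ∨ q.1 = p.1 + 1))

/-- The skeleton graph `Σ_λ`: vertices are boxes of `λ`, edges connect adjacent boxes. -/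
def skel (l : ℕ) (lam : ℕ → ℕ) : SimpleGraph (ℕ × ℕ) where
  Adj p q := p ∈ ydiag l lam ∧ q ∈ ydiag l lam ∧ adjBox p q
  symm := by
    constructor
    intro p q ⟨hp, hq, h⟩
    refine ⟨hq, hp, ?_⟩
    unfold adjBox at *
    tauto
  loopless := by
    constructor
    intro p ⟨_, _, h⟩
    unfold adjBox at h
    omega

/-- The corners `(x,y)` of L-shaped subgraphs of `Σ_λ`: boxes `(x,y)` with
`(x+1,y)` and `(x+1,y+1)` also boxes of `λ`.  The corresponding L-shaped subgraph has the
two edges `{(x,y),(x+1,y)}` and `{(x+1,y),(x+1,y+1)}`. -/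
def lshapes (l : ℕ) (lam : ℕ → ℕ) : Finset (ℕ × ℕ) :=
  (ydiag l lam).filter fun p =>
    (p.1 + 1, p.2) ∈ ydiag l lam ∧ (p.1 + 1, p.2 + 1) ∈ ydiag l lam

/-- The first edge of the L-shaped subgraph with corner `p`. -/
def ledge1 (p : ℕ × ℕ) : Sym2 (ℕ × ℕ) := s(p, (p.1 + 1, p.2))

/-- The second edge of the L-shaped subgraph with corner `p`. -/
def ledge2 (p : ℕ × ℕ) : Sym2 (ℕ × ℕ) := s((p.1 + 1, p.2), (p.1 + 1, p.2 + 1))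

/-- `D` is the set of edges selected by a choice function picking exactly one of the two
edges of each L-shaped subgraph (and nothing else). -/
def lsel (l : ℕ) (lam : ℕ → ℕ) (D : Set (Sym2 (ℕ × ℕ))) : Prop :=
  (∀ p ∈ lshapes l lam,
      (ledge1 p ∈ D ∧ ledge2 p ∉ D) ∨ (ledge1 p ∉ D ∧ ledge2 p ∈ D)) ∧
  ∀ e ∈ D, ∃ p ∈ lshapes l lam, e = ledge1 p ∨ e = ledge2 p

namespace Stmt2Aux

open SimpleGraph

lemma mem_ydiag {l : ℕ} {lam : ℕ → ℕ} {a b : ℕ} :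
    (a, b) ∈ ydiag l lam ↔ 1 ≤ a ∧ a ≤ l ∧ 1 ≤ b ∧ b ≤ lam a := by
  constructor
  · intro h
    simp only [ydiag, Finset.mem_biUnion, Finset.mem_image, Finset.mem_Icc] at h
    obtain ⟨x, hx, y, hy, hxy⟩ := h
    rw [Prod.mk.injEq] at hxy
    obtain ⟨rfl, rfl⟩ := hxy
    exact ⟨hx.1, hx.2, hy.1, hy.2⟩
  · rintro ⟨h1, h2, h3, h4⟩
    refine Finset.mem_biUnion.mpr ⟨a, Finset.mem_Icc.mpr ⟨h1, h2⟩, ?_⟩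
    exact Finset.mem_image.mpr ⟨b, Finset.mem_Icc.mpr ⟨h3, h4⟩, rfl⟩

lemma adjBox_mk {a b c d : ℕ} :
    adjBox (a, b) (c, d) ↔
      ((a = c ∧ (b = d + 1 ∨ d = b + 1)) ∨ (b = d ∧ (a = c + 1 ∨ c = a + 1))) := Iff.rfl

lemma mem_lshapes {l : ℕ} {lam : ℕ → ℕ} {p : ℕ × ℕ} :
    p ∈ lshapes l lam ↔ p ∈ ydiag l lam ∧ (p.1 + 1, p.2) ∈ ydiag l lam ∧
      (p.1 + 1, p.2 + 1) ∈ ydiag l lam := by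
  simp only [lshapes, Finset.mem_filter]

lemma ledge1_inj {p q : ℕ × ℕ} (h : ledge1 p = ledge1 q) : p = q := by
  obtain ⟨p1, p2⟩ := p; obtain ⟨q1, q2⟩ := q
  simp only [ledge1, Sym2.eq_iff, Prod.mk.injEq] at h
  simp only [Prod.mk.injEq]
  omega

lemma ledge2_inj {p q : ℕ × ℕ} (h : ledge2 p = ledge2 q) : p = q := by
  obtain ⟨p1, p2⟩ := p; obtain ⟨q1, q2⟩ := q
  simp only [ledge2, Sym2.eq_iff, Prod.mk.injEq] at h
  simp only [Prod.mk.injEq]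
  omega

lemma ledge1_ne_ledge2 (p q : ℕ × ℕ) : ledge1 p ≠ ledge2 q := by
  obtain ⟨p1, p2⟩ := p; obtain ⟨q1, q2⟩ := q
  simp only [ne_eq, ledge1, ledge2, Sym2.eq_iff, Prod.mk.injEq]
  omega

variable {l : ℕ} {lam : ℕ → ℕ} {D : Set (Sym2 (ℕ × ℕ))}

lemma row1_not_mem (hD : lsel l lam D) (y : ℕ) :
    s(((1 : ℕ), y), ((1 : ℕ), y + 1)) ∉ D := by
  intro h
  obtain ⟨q, hq, h1 | h2⟩ := hD.2 _ h
  · obtain ⟨q1, q2⟩ := q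
    simp only [ledge1, Sym2.eq_iff, Prod.mk.injEq] at h1
    omega
  · obtain ⟨q1, q2⟩ := q
    have hq1 : 1 ≤ q1 := (mem_ydiag.mp (mem_lshapes.mp hq).1).1
    simp only [ledge2, Sym2.eq_iff, Prod.mk.injEq] at h2
    omega

lemma vert_edge_mem (hD : lsel l lam D) {x y : ℕ} (h : s((x, y), (x + 1, y)) ∈ D) :
    (x, y) ∈ lshapes l lam ∧ s((x + 1, y), (x + 1, y + 1)) ∉ D := by
  obtain ⟨q, hq, h1 | h2⟩ := hD.2 _ h
  · have hqe : q = (x, y) := by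
      obtain ⟨q1, q2⟩ := q
      simp only [ledge1, Sym2.eq_iff, Prod.mk.injEq] at h1
      simp only [Prod.mk.injEq]
      omega
    subst hqe
    refine ⟨hq, ?_⟩
    have h1' : ledge1 (x, y) ∈ D := h1 ▸ h
    rcases hD.1 _ hq with ⟨-, h2'⟩ | ⟨hn, -⟩
    · exact h2'
    · exact absurd h1' hn
  · exfalso
    obtain ⟨q1, q2⟩ := q
    simp only [ledge2, Sym2.eq_iff, Prod.mk.injEq] at h2
    omega

lemma reach_aux (hl : 1 ≤ l)
    (hmono : ∀ i j, 1 ≤ i → i ≤ j → j ≤ l → lam j ≤ lam i)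
    (hD : lsel l lam D) :
    ∀ x y, (x, y) ∈ ydiag l lam →
      ((skel l lam).deleteEdges D).Reachable (x, y) (1, 1) := by
  have row1 : ∀ y : ℕ, 1 ≤ y → y ≤ lam 1 →
      ((skel l lam).deleteEdges D).Reachable (1, y) (1, 1) := by
    intro y
    induction y with
    | zero => omega
    | succ n ih =>
      intro h1 h2
      rcases Nat.eq_or_lt_of_le h1 with h | h
      · rw [← h]
      · have hn1 : 1 ≤ n := by omega
        have hadj : ((skel l lam).deleteEdges D).Adj (1, n + 1) (1, n) := by
          rw [SimpleGraph.deleteEdges_adj]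
          refine ⟨⟨mem_ydiag.mpr ⟨le_refl 1, hl, by omega, h2⟩,
            mem_ydiag.mpr ⟨le_refl 1, hl, hn1, by omega⟩,
            Or.inl ⟨rfl, Or.inl rfl⟩⟩, ?_⟩
          rw [Sym2.eq_swap]
          exact row1_not_mem hD n
        exact hadj.reachable.trans (ih hn1 (by omega))
  intro x
  induction x using Nat.strong_induction_on with
  | _ x ihx =>
    have inner : ∀ k y, lam x - y = k → (x, y) ∈ ydiag l lam →
        ((skel l lam).deleteEdges D).Reachable (x, y) (1, 1) := by
      intro k
      induction k using Nat.strong_induction_on with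
      | _ k ihk =>
        intro y hk hy
        have hy' := mem_ydiag.mp hy
        rcases Nat.lt_or_ge 1 x with hx2 | hx1
        · obtain ⟨x', rfl⟩ : ∃ x', x = x' + 1 := ⟨x - 1, by omega⟩
          by_cases hmem : s((x', y), (x' + 1, y)) ∈ D
          · obtain ⟨hq, hnot⟩ := vert_edge_mem hD hmem
            have hy1 : (x' + 1, y + 1) ∈ ydiag l lam := (mem_lshapes.mp hq).2.2
            have hy1' := mem_ydiag.mp hy1
            have hadj : ((skel l lam).deleteEdges D).Adj (x' + 1, y) (x' + 1, y + 1) := by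
              rw [SimpleGraph.deleteEdges_adj]
              exact ⟨⟨hy, hy1, Or.inl ⟨rfl, Or.inr rfl⟩⟩, hnot⟩
            exact hadj.reachable.trans
              (ihk (lam (x' + 1) - (y + 1)) (by omega) (y + 1) rfl hy1)
          · have hx'mem : (x', y) ∈ ydiag l lam := by
              refine mem_ydiag.mpr ⟨by omega, by omega, hy'.2.2.1, ?_⟩
              exact le_trans hy'.2.2.2 (hmono x' (x' + 1) (by omega) (by omega) hy'.2.1)
            have hadj : ((skel l lam).deleteEdges D).Adj (x' + 1, y) (x', y) := by
              rw [SimpleGraph.deleteEdges_adj]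
              refine ⟨⟨hy, hx'mem, Or.inr ⟨rfl, Or.inl rfl⟩⟩, ?_⟩
              rw [Sym2.eq_swap]
              exact hmem
            exact hadj.reachable.trans (ihx x' (by omega) y hx'mem)
        · have hx : x = 1 := by omega
          subst hx
          exact row1 y hy'.2.2.1 hy'.2.2.2
    intro y hy
    exact inner (lam x - y) y rfl hy

/-- The potential function on boxes. -/
def mu (lam : ℕ → ℕ) (p : ℕ × ℕ) : ℕ ×ₗ ℕ :=
  toLex (p.1, if p.1 = 1 then p.2 else lam p.1 + 1 - p.2)

lemma mu_lt_mu {lam : ℕ → ℕ} {x y p q : ℕ} :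
    mu lam (p, q) < mu lam (x, y) ↔
      p < x ∨ (p = x ∧ (if p = 1 then q else lam p + 1 - q) <
        (if x = 1 then y else lam x + 1 - y)) :=
  Prod.Lex.lt_iff

lemma mu_ne {u a : ℕ × ℕ} (hu : u ∈ ydiag l lam) (ha : a ∈ ydiag l lam)
    (h : adjBox u a) : mu lam u ≠ mu lam a := by
  obtain ⟨x, y⟩ := u; obtain ⟨p, q⟩ := a
  rw [mem_ydiag] at hu ha
  rw [adjBox_mk] at h
  intro he
  have he' : (x, (if x = 1 then y else lam x + 1 - y))
      = (p, (if p = 1 then q else lam p + 1 - q)) := toLex.injective he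
  rw [Prod.mk.injEq] at he'
  obtain ⟨rfl, h2⟩ := he'
  split_ifs at h2 <;> omega

lemma small_nbr {x y p q : ℕ}
    (hu : (x, y) ∈ ydiag l lam) (ha : (p, q) ∈ ydiag l lam)
    (hadj : adjBox (x, y) (p, q)) (hlt : mu lam (p, q) < mu lam (x, y)) :
    (x = 1 ∧ p = 1 ∧ q + 1 = y) ∨
      (x ≠ 1 ∧ ((p = x ∧ q = y + 1) ∨ (p + 1 = x ∧ q = y))) := by
  rw [mem_ydiag] at hu ha
  rw [adjBox_mk] at hadj
  rcases hadj with ⟨h1, h2⟩ | ⟨h1, h2⟩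
  · subst h1
    rw [mu_lt_mu] at hlt
    split_ifs at hlt <;> omega
  · rcases h2 with h2 | h2
    · subst h2
      omega
    · subst h2
      rw [mu_lt_mu] at hlt
      split_ifs at hlt <;> omega

lemma uniq (hmono : ∀ i j, 1 ≤ i → i ≤ j → j ≤ l → lam j ≤ lam i)
    (hD : lsel l lam D) {u a b : ℕ × ℕ}
    (ha : ((skel l lam).deleteEdges D).Adj u a)
    (hb : ((skel l lam).deleteEdges D).Adj u b)
    (hmua : mu lam a < mu lam u) (hmub : mu lam b < mu lam u) : a = b := by
  have key : ∀ x y : ℕ, (x + 1, y) ∈ ydiag l lam → (x + 1, y + 1) ∈ ydiag l lam →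
      1 ≤ x → s((x + 1, y), (x + 1, y + 1)) ∉ D → s((x + 1, y), (x, y)) ∉ D → False := by
    intro x y hu1 hv hx hvD hwD
    have hu' := mem_ydiag.mp hu1
    have hq : (x, y) ∈ lshapes l lam := by
      rw [mem_lshapes]
      exact ⟨mem_ydiag.mpr ⟨hx, by omega, by omega,
        le_trans hu'.2.2.2 (hmono x (x + 1) hx (by omega) hu'.2.1)⟩, hu1, hv⟩
    rcases hD.1 _ hq with ⟨h1, -⟩ | ⟨-, h2⟩
    · exact hwD (by rw [Sym2.eq_swap]; exact h1)
    · exact hvD h2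
  rw [SimpleGraph.deleteEdges_adj] at ha hb
  obtain ⟨⟨hu, ha1, ha2⟩, haD⟩ := ha
  obtain ⟨⟨-, hb1, hb2⟩, hbD⟩ := hb
  obtain ⟨x0, y0⟩ := u; obtain ⟨pa, qa⟩ := a; obtain ⟨pb, qb⟩ := b
  have hA := small_nbr hu ha1 ha2 hmua
  have hB := small_nbr hu hb1 hb2 hmub
  have hu' := mem_ydiag.mp hu
  have ha' := mem_ydiag.mp ha1
  have hb' := mem_ydiag.mp hb1
  rcases hA with ⟨h1, hA⟩ | ⟨h1, hA⟩
  · rcases hB with ⟨-, hB⟩ | ⟨h2, -⟩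
    · simp only [Prod.mk.injEq]; omega
    · exact absurd h1 h2
  · rcases hB with ⟨h2, -⟩ | ⟨-, hB⟩
    · exact absurd h2 h1
    · obtain ⟨x', rfl⟩ : ∃ x', x0 = x' + 1 := ⟨x0 - 1, by omega⟩
      rcases hA with ⟨hA1, hA2⟩ | ⟨hA1, hA2⟩ <;> rcases hB with ⟨hB1, hB2⟩ | ⟨hB1, hB2⟩
      · simp only [Prod.mk.injEq]; omega
      · obtain ⟨rfl, rfl⟩ : pa = x' + 1 ∧ qa = y0 + 1 := ⟨hA1, hA2⟩
        obtain ⟨rfl, rfl⟩ : pb = x' ∧ qb = y0 := ⟨by omega, hB2⟩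
        exact absurd (key _ _ hu ha1 (by omega) haD hbD) (fun h => h)
      · obtain ⟨rfl, rfl⟩ : pb = x' + 1 ∧ qb = y0 + 1 := ⟨hB1, hB2⟩
        obtain ⟨rfl, rfl⟩ : pa = x' ∧ qa = y0 := ⟨by omega, hA2⟩
        exact absurd (key _ _ hu hb1 (by omega) hbD haD) (fun h => h)
      · simp only [Prod.mk.injEq]; omega

lemma cycle_contra {V : Type*} {α : Type*} [LinearOrder α] {G : SimpleGraph V} {u : V}
    (f : V → α) (q : G.Walk u u) (hq : q.IsCycle)
    (hloc : ∀ a b, G.Adj u a → G.Adj u b → f a < f u → f b < f u → a = b)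
    (hne : ∀ a, G.Adj u a → f a ≠ f u)
    (hmax : ∀ w ∈ q.support, f w ≤ f u) : False := by
  have first_edge : ∀ {x y : V} (w : G.Walk x y) (hw : ¬w.Nil),
      s(x, w.getVert 1) ∈ w.edges := by
    intro x y w hw
    cases w with
    | nil => simp at hw
    | cons h w' => simp [Walk.getVert_cons_succ]
  cases q with
  | nil => exact hq.ne_nil rfl
  | cons hadj p =>
    rename_i w
    have h3 := hq.three_le_length
    rw [Walk.cons_isCycle_iff] at hq
    obtain ⟨hpath, hedge⟩ := hq
    simp only [Walk.length_cons] at h3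
    have hpn : ¬p.reverse.Nil := by
      rw [Walk.not_nil_iff_lt_length, Walk.length_reverse]; omega
    set b := p.reverse.getVert 1 with hbdef
    have hbadj : G.Adj u b := p.reverse.adj_snd hpn
    have hbmem : s(u, b) ∈ p.edges := by
      have h := first_edge p.reverse hpn
      rw [Walk.edges_reverse, List.mem_reverse] at h
      exact h
    have hbne : b ≠ w := fun h => hedge (by rwa [h] at hbmem)
    have hbsup : b ∈ p.support := Walk.snd_mem_support_of_mem_edges p hbmem
    have hbsup' : b ∈ (Walk.cons hadj p).support := by
      rw [Walk.support_cons]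
      exact List.mem_cons_of_mem _ hbsup
    have hwsup' : w ∈ (Walk.cons hadj p).support := by
      rw [Walk.support_cons]
      exact List.mem_cons_of_mem _ p.start_mem_support
    have h1 : f b < f u := lt_of_le_of_ne (hmax b hbsup') (hne b hbadj)
    have h2 : f w < f u := lt_of_le_of_ne (hmax w hwsup') (hne w hadj)
    exact hbne (hloc b w hbadj hadj h1 h2)

lemma acyc (hmono : ∀ i j, 1 ≤ i → i ≤ j → j ≤ l → lam j ≤ lam i)
    (hD : lsel l lam D) : ((skel l lam).deleteEdges D).IsAcyclic := by
  intro v c hc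
  have hv : v ∈ c.support := c.start_mem_support
  obtain ⟨u, huF, hmaxF⟩ := Finset.exists_max_image c.support.toFinset (fun w => mu lam w)
    ⟨v, List.mem_toFinset.mpr hv⟩
  rw [List.mem_toFinset] at huF
  have hmax : ∀ w ∈ c.support, mu lam w ≤ mu lam u := fun w hw =>
    hmaxF w (List.mem_toFinset.mpr hw)
  refine cycle_contra (mu lam) (c.rotate u huF) (hc.rotate huF) ?_ ?_ ?_
  · intro a b hadja hadjb h1 h2
    exact uniq hmono hD hadja hadjb h1 h2
  · intro a hadja
    rw [SimpleGraph.deleteEdges_adj] at hadja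
    exact (mu_ne hadja.1.1 hadja.1.2.1 hadja.1.2.2).symm
  · intro z hz
    apply hmax
    rw [Walk.support_eq_cons] at hz
    rcases List.mem_cons.mp hz with rfl | hz
    · exact huF
    · exact List.mem_of_mem_tail (((Walk.support_rotate c u huF).mem_iff).mp hz)

/-- D generated from a choice finset. -/
def Dof (l : ℕ) (lam : ℕ → ℕ) (S : Finset (ℕ × ℕ)) : Set (Sym2 (ℕ × ℕ)) :=
  {e | ∃ p ∈ lshapes l lam, (p ∈ S ∧ e = ledge1 p) ∨ (p ∉ S ∧ e = ledge2 p)}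

lemma lsel_Dof (S : Finset (ℕ × ℕ)) : lsel l lam (Dof l lam S) := by
  constructor
  · intro p hp
    by_cases hS : p ∈ S
    · left
      refine ⟨⟨p, hp, Or.inl ⟨hS, rfl⟩⟩, ?_⟩
      rintro ⟨q, hq, ⟨-, he⟩ | ⟨hqS, he⟩⟩
      · exact ledge1_ne_ledge2 q p he.symm
      · exact hqS (ledge2_inj he ▸ hS)
    · right
      refine ⟨?_, ⟨p, hp, Or.inr ⟨hS, rfl⟩⟩⟩
      rintro ⟨q, hq, ⟨hqS, he⟩ | ⟨-, he⟩⟩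
      · exact hS (ledge1_inj he ▸ hqS)
      · exact ledge1_ne_ledge2 p q he
  · rintro e ⟨p, hp, ⟨-, rfl⟩ | ⟨-, rfl⟩⟩
    exacts [⟨p, hp, Or.inl rfl⟩, ⟨p, hp, Or.inr rfl⟩]

lemma Dof_ne {S T : Finset (ℕ × ℕ)} (hS : S ⊆ lshapes l lam) {p : ℕ × ℕ}
    (hpS : p ∈ S) (hpT : p ∉ T) :
    (skel l lam).deleteEdges (Dof l lam S) ≠ (skel l lam).deleteEdges (Dof l lam T) := by
  intro h
  have hp : p ∈ lshapes l lam := hS hpS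
  have hp' := mem_lshapes.mp hp
  have hadj : (skel l lam).Adj p (p.1 + 1, p.2) :=
    ⟨hp'.1, hp'.2.1, Or.inr ⟨rfl, Or.inr rfl⟩⟩
  have h1 : ledge1 p ∈ Dof l lam S := ⟨p, hp, Or.inl ⟨hpS, rfl⟩⟩
  have h2 : ledge1 p ∉ Dof l lam T := by
    rintro ⟨q, hq, ⟨hqT, he⟩ | ⟨-, he⟩⟩
    · exact hpT (ledge1_inj he ▸ hqT)
    · exact ledge1_ne_ledge2 p q he
  have hT : ((skel l lam).deleteEdges (Dof l lam T)).Adj p (p.1 + 1, p.2) := by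
    rw [SimpleGraph.deleteEdges_adj]
    exact ⟨hadj, h2⟩
  rw [← h, SimpleGraph.deleteEdges_adj] at hT
  exact hT.2 h1

end Stmt2Aux

open Stmt2Aux in
/-- (a) Distinct L-shaped subgraphs of `Σ_λ` have disjoint edge sets;
(b) deleting the edges selected by any choice function yields a spanning tree of `Σ_λ`
(connected on all boxes of `λ` and acyclic);
(c) consequently there are exactly `2^m` admissible trees, `m` the number of L-shapes. -/
theorem stmt2 (l : ℕ) (lam : ℕ → ℕ) (hl : 1 ≤ l)
    (hmono : ∀ i j, 1 ≤ i → i ≤ j → j ≤ l → lam j ≤ lam i)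
    (hpos : ∀ i, 1 ≤ i → i ≤ l → 1 ≤ lam i) :
    (∀ p ∈ lshapes l lam, ∀ q ∈ lshapes l lam, p ≠ q →
        ({ledge1 p, ledge2 p} ∩ {ledge1 q, ledge2 q} : Set (Sym2 (ℕ × ℕ))) = ∅) ∧
    (∀ D : Set (Sym2 (ℕ × ℕ)), lsel l lam D →
        (∀ a ∈ ydiag l lam, ∀ b ∈ ydiag l lam,
          ((skel l lam).deleteEdges D).Reachable a b) ∧
        ((skel l lam).deleteEdges D).IsAcyclic) ∧
    Set.ncard {H : SimpleGraph (ℕ × ℕ) | ∃ D, lsel l lam D ∧ H = (skel l lam).deleteEdges D}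
      = 2 ^ (lshapes l lam).card := by
  classical
  refine ⟨?_, ?_, ?_⟩
  · -- (a)
    intro p hp q hq hpq
    rw [Set.eq_empty_iff_forall_notMem]
    rintro e ⟨h1, h2⟩
    simp only [Set.mem_insert_iff, Set.mem_singleton_iff] at h1 h2
    rcases h1 with rfl | rfl <;> rcases h2 with he | he
    · exact hpq (ledge1_inj he)
    · exact ledge1_ne_ledge2 p q he
    · exact ledge1_ne_ledge2 q p he.symm
    · exact hpq (ledge2_inj he)
  · -- (b)
    intro D hD
    constructor
    · rintro ⟨a1, a2⟩ ha ⟨b1, b2⟩ hb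
      exact (reach_aux hl hmono hD a1 a2 ha).trans (reach_aux hl hmono hD b1 b2 hb).symm
    · exact acyc hmono hD
  · -- (c)
    have hset : {H : SimpleGraph (ℕ × ℕ) | ∃ D, lsel l lam D ∧
          H = (skel l lam).deleteEdges D}
        = (fun S : Finset (ℕ × ℕ) => (skel l lam).deleteEdges (Dof l lam S)) ''
            ↑(lshapes l lam).powerset := by
      ext H
      simp only [Set.mem_setOf_eq, Set.mem_image, Finset.mem_coe, Finset.mem_powerset]
      constructor
      · rintro ⟨D, hD, rfl⟩
        refine ⟨(lshapes l lam).filter (fun p => ledge1 p ∈ D),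
          Finset.filter_subset _ _, ?_⟩
        have hDeq : Dof l lam ((lshapes l lam).filter (fun p => ledge1 p ∈ D)) = D := by
          ext e
          constructor
          · rintro ⟨q, hq, ⟨hqS, rfl⟩ | ⟨hqS, rfl⟩⟩
            · exact (Finset.mem_filter.mp hqS).2
            · rcases hD.1 q hq with ⟨h1, -⟩ | ⟨-, h2⟩
              · exact absurd (Finset.mem_filter.mpr ⟨hq, h1⟩) hqS
              · exact h2
          · intro he
            obtain ⟨q, hq, rfl | rfl⟩ := hD.2 e he
            · exact ⟨q, hq, Or.inl ⟨Finset.mem_filter.mpr ⟨hq, he⟩, rfl⟩⟩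
            · refine ⟨q, hq, Or.inr ⟨?_, rfl⟩⟩
              intro hmem
              rcases hD.1 q hq with ⟨-, h2⟩ | ⟨h1', -⟩
              · exact h2 he
              · exact h1' (Finset.mem_filter.mp hmem).2
        rw [hDeq]
      · rintro ⟨S, hS, rfl⟩
        exact ⟨Dof l lam S, lsel_Dof S, rfl⟩
    rw [hset, Set.ncard_image_of_injOn, Set.ncard_coe_finset, Finset.card_powerset]
    intro S hS T hT h
    rw [Finset.mem_coe, Finset.mem_powerset] at hS hT
    by_contra hne
    have : ¬(S ⊆ T ∧ T ⊆ S) := fun ⟨hab, hba⟩ => hne (subset_antisymm hab hba)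
    rcases not_and_or.mp this with hh | hh
    · obtain ⟨p, hp1, hp2⟩ := Finset.not_subset.mp hh
      exact Dof_ne hS hp1 hp2 h
    · obtain ⟨p, hp1, hp2⟩ := Finset.not_subset.mp hh
      exact Dof_ne hT hp1 hp2 h.symm
end

section
/- Let x > 0, z > 0 be real numbers and let s be a real number that is not an integer. For 0 < q < 1 let ϑ_q(y) = (y^{1/2} − y^{−1/2}) ∏_{i=1}^{∞}(1 − y q^i)(1 − q^i/y). Then lim_{q → 0^+} ϑ_q(x · z · q^s) / ϑ_q(z · q^s) = x^{−(⌊s⌋ + 1/2)}, where ⌊s⌋ is the floor of s and x^r denotes the real power of the positive real x. -/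
open Filter Topology

/-- The odd Jacobi theta function
`ϑ_q(x) = (x^{1/2} - x^{-1/2}) ∏_{i=1}^∞ (1 - x q^i)(1 - q^i/x)` for real `q, x`. -/
noncomputable def theta (q x : ℝ) : ℝ :=
  (Real.sqrt x - (Real.sqrt x)⁻¹) * ∏' i : ℕ, ((1 - x * q ^ (i + 1)) * (1 - q ^ (i + 1) / x))

open Real

/-- q^e → 0 as q → 0⁺ for e > 0. -/
lemma aux_rpow_zero {e : ℝ} (he : 0 < e) :
    Tendsto (fun q : ℝ => q ^ e) (𝓝[>] 0) (𝓝 0) := by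
  have := (Real.continuousAt_rpow_const 0 e (Or.inr he.le)).tendsto
  rw [Real.zero_rpow he.ne'] at this
  exact this.mono_left nhdsWithin_le_nhds

lemma aux_rpow_zero_within {e : ℝ} (he : 0 < e) :
    Tendsto (fun q : ℝ => q ^ e) (𝓝[>] 0) (𝓝[>] 0) := by
  rw [tendsto_nhdsWithin_iff]
  refine ⟨aux_rpow_zero he, ?_⟩
  filter_upwards [self_mem_nhdsWithin] with q hq
  exact Real.rpow_pos_of_pos hq _

/-- q^e → ∞ as q → 0⁺ for e < 0. -/
lemma aux_rpow_atTop {e : ℝ} (he : e < 0) :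
    Tendsto (fun q : ℝ => q ^ e) (𝓝[>] 0) atTop := by
  have h1 : Tendsto (fun q : ℝ => ((q ^ (-e))⁻¹)) (𝓝[>] 0) atTop :=
    tendsto_inv_nhdsGT_zero.comp (aux_rpow_zero_within (by linarith))
  refine h1.congr' ?_
  filter_upwards [self_mem_nhdsWithin] with q hq
  rw [← Real.rpow_neg (le_of_lt hq), neg_neg]

/-- (1 - a q^e) → 1 for e > 0. -/
lemma aux_one_sub {e a : ℝ} (he : 0 < e) :
    Tendsto (fun q : ℝ => 1 - a * q ^ e) (𝓝[>] 0) (𝓝 1) := by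
  have := ((aux_rpow_zero he).const_mul a).const_sub 1
  simpa using this

/-- ratio (1-a q^e)/(1-b q^e) → a/b for e < 0, a b ≠ 0. -/
lemma aux_ratio_neg {e a b : ℝ} (he : e < 0) (hb : b ≠ 0) :
    Tendsto (fun q : ℝ => (1 - a * q ^ e) / (1 - b * q ^ e)) (𝓝[>] 0) (𝓝 (a / b)) := by
  have hQ : Tendsto (fun q : ℝ => (q ^ e)⁻¹) (𝓝[>] 0) (𝓝 0) :=
    (aux_rpow_atTop he).inv_tendsto_atTop
  have h1 : Tendsto (fun q : ℝ => ((q ^ e)⁻¹ - a) / ((q ^ e)⁻¹ - b)) (𝓝[>] 0)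
      (𝓝 ((0 - a) / (0 - b))) := by
    apply Tendsto.div ((hQ.sub_const a)) ((hQ.sub_const b))
    simpa using hb
  have h2 : ((0:ℝ) - a) / (0 - b) = a / b := by
    rw [zero_sub, zero_sub, neg_div_neg_eq]
  rw [h2] at h1
  refine h1.congr' ?_
  filter_upwards [self_mem_nhdsWithin] with q hq
  have hQ0 : q ^ e ≠ 0 := (Real.rpow_pos_of_pos hq e).ne'
  field_simp

/-- ratio for positive exponent: → 1. -/
lemma aux_ratio_pos {e a b : ℝ} (he : 0 < e) :
    Tendsto (fun q : ℝ => (1 - a * q ^ e) / (1 - b * q ^ e)) (𝓝[>] 0) (𝓝 1) := by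
  have := (aux_one_sub (a := a) he).div (aux_one_sub (a := b) he) one_ne_zero
  simpa [Pi.div_def] using this

/-- |log(1-u)| ≤ 2u for 0 ≤ u ≤ 1/2 -/
lemma aux_abs_log_one_sub {u : ℝ} (h0 : 0 ≤ u) (h1 : u ≤ 1/2) :
    |Real.log (1 - u)| ≤ 2 * u := by
  have hpos : (0:ℝ) < 1 - u := by linarith
  have hle : Real.log (1 - u) ≤ 0 := Real.log_nonpos (by linarith) (by linarith)
  rw [abs_of_nonpos hle]
  have h2 : Real.log (1 - u)⁻¹ ≤ (1 - u)⁻¹ - 1 := Real.log_le_sub_one_of_pos (by positivity)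
  rw [Real.log_inv] at h2
  have h3 : (1 - u)⁻¹ - 1 ≤ 2 * u := by
    rw [inv_eq_one_div, div_sub' hpos.ne.symm, div_le_iff₀ hpos]
    nlinarith
  linarith

/-- log bound for a product factor (1-A)(1-B). -/
lemma aux_abs_log_factor {A B : ℝ} (hA0 : 0 ≤ A) (hA : A ≤ 1/2) (hB0 : 0 ≤ B) (hB : B ≤ 1/2) :
    |Real.log ((1 - A) * (1 - B))| ≤ 2 * A + 2 * B := by
  have h1 : (0:ℝ) < 1 - A := by linarith
  have h2 : (0:ℝ) < 1 - B := by linarith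
  rw [Real.log_mul h1.ne' h2.ne']
  calc |Real.log (1 - A) + Real.log (1 - B)| ≤ |Real.log (1 - A)| + |Real.log (1 - B)| :=
        abs_add_le _ _
    _ ≤ 2 * A + 2 * B := by
        have := aux_abs_log_one_sub hA0 hA
        have := aux_abs_log_one_sub hB0 hB
        linarith

section tail

variable {D E q : ℝ}

lemma aux_fac_pos (hq : 0 < q) (hq1 : q < 1) (hD : 0 ≤ D) (hE : 0 ≤ E)
    (hD2 : D ≤ 1/2) (hE2 : E ≤ 1/2) (i : ℕ) :
    0 < (1 - D * q ^ i) * (1 - E * q ^ i) := by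
  have hqi : 0 < q ^ i := pow_pos hq i
  have hqi1 : q ^ i ≤ 1 := pow_le_one₀ hq.le hq1.le
  have h1 : D * q ^ i ≤ 1/2 := by nlinarith
  have h2 : E * q ^ i ≤ 1/2 := by nlinarith
  nlinarith

lemma aux_log_bound (hq : 0 < q) (hq1 : q < 1) (hD : 0 ≤ D) (hE : 0 ≤ E)
    (hD2 : D ≤ 1/2) (hE2 : E ≤ 1/2) (i : ℕ) :
    |Real.log ((1 - D * q ^ i) * (1 - E * q ^ i))| ≤ (2*D + 2*E) * q ^ i := by
  have hqi : 0 < q ^ i := pow_pos hq i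
  have hqi1 : q ^ i ≤ 1 := pow_le_one₀ hq.le hq1.le
  have h1 : D * q ^ i ≤ 1/2 := by nlinarith
  have h2 : E * q ^ i ≤ 1/2 := by nlinarith
  have := aux_abs_log_factor (by positivity) h1 (by positivity) h2
  nlinarith

lemma aux_log_summable (hq : 0 < q) (hq1 : q < 1) (hD : 0 ≤ D) (hE : 0 ≤ E)
    (hD2 : D ≤ 1/2) (hE2 : E ≤ 1/2) :
    Summable (fun i : ℕ => Real.log ((1 - D * q ^ i) * (1 - E * q ^ i))) := by
  apply Summable.of_norm_bounded
    ((summable_geometric_of_lt_one hq.le hq1).mul_left (2*D + 2*E))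
  exact fun i => aux_log_bound hq hq1 hD hE hD2 hE2 i

lemma aux_tail_hasProd (hq : 0 < q) (hq1 : q < 1) (hD : 0 ≤ D) (hE : 0 ≤ E)
    (hD2 : D ≤ 1/2) (hE2 : E ≤ 1/2) :
    HasProd (fun i : ℕ => (1 - D * q ^ i) * (1 - E * q ^ i))
      (rexp (∑' i : ℕ, Real.log ((1 - D * q ^ i) * (1 - E * q ^ i)))) := by
  have hs := aux_log_summable hq hq1 hD hE hD2 hE2
  refine (hs.hasSum.rexp).congr_fun fun i => ?_
  simp only [Function.comp_apply]
  exact (Real.exp_log (aux_fac_pos hq hq1 hD hE hD2 hE2 i)).symm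

lemma aux_tail_tsum_bound (hq : 0 < q) (hq1 : q < 1) (hD : 0 ≤ D) (hE : 0 ≤ E)
    (hD2 : D ≤ 1/2) (hE2 : E ≤ 1/2) :
    |∑' i : ℕ, Real.log ((1 - D * q ^ i) * (1 - E * q ^ i))| ≤ (2*D + 2*E) / (1 - q) := by
  have hgeo : Summable (fun i : ℕ => (2*D + 2*E) * q ^ i) :=
    (summable_geometric_of_lt_one hq.le hq1).mul_left _
  have hsn : Summable (fun i : ℕ => ‖Real.log ((1 - D * q ^ i) * (1 - E * q ^ i))‖) :=
    Summable.of_nonneg_of_le (fun i => norm_nonneg _)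
      (fun i => aux_log_bound hq hq1 hD hE hD2 hE2 i) hgeo
  have h1 : ‖∑' i : ℕ, Real.log ((1 - D * q ^ i) * (1 - E * q ^ i))‖
      ≤ ∑' i : ℕ, ‖Real.log ((1 - D * q ^ i) * (1 - E * q ^ i))‖ :=
    norm_tsum_le_tsum_norm hsn
  have h2 : ∑' i : ℕ, ‖Real.log ((1 - D * q ^ i) * (1 - E * q ^ i))‖
      ≤ ∑' i : ℕ, (2*D + 2*E) * q ^ i :=
    Summable.tsum_le_tsum (fun i => aux_log_bound hq hq1 hD hE hD2 hE2 i) hsn hgeo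
  have h3 : ∑' i : ℕ, (2*D + 2*E) * q ^ i = (2*D + 2*E) / (1 - q) := by
    rw [tsum_mul_left, tsum_geometric_of_lt_one hq.le hq1]
    ring
  rw [← Real.norm_eq_abs]
  linarith

end tail

/-- Rewriting a theta factor with shifted index in terms of powers. -/
lemma aux_fac_shift {c q s : ℝ} (hc : 0 < c) (hq : 0 < q) (i k : ℕ) :
    (1 - c * q ^ s * q ^ (i + k + 1)) * (1 - q ^ (i + k + 1) / (c * q ^ s))
    = (1 - c * q ^ (s + (k : ℝ) + 1) * q ^ i) * (1 - q ^ ((k : ℝ) + 1 - s) / c * q ^ i) := by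
  have hqs : (0:ℝ) < q ^ s := Real.rpow_pos_of_pos hq s
  have h1 : q ^ (s + (k : ℝ) + 1) = q ^ s * (q ^ k * q) := by
    rw [Real.rpow_add hq, Real.rpow_add hq, Real.rpow_natCast, Real.rpow_one, mul_assoc]
  have h2 : q ^ ((k : ℝ) + 1 - s) = q ^ k * q / q ^ s := by
    rw [sub_eq_add_neg, Real.rpow_add hq, Real.rpow_add hq, Real.rpow_natCast, Real.rpow_one,
      Real.rpow_neg hq.le, div_eq_mul_inv]
  have h3 : q ^ (i + k + 1) = q ^ i * q ^ k * q := by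
    rw [pow_succ, pow_add]
  rw [h1, h2, h3]
  field_simp

/-- The tail log-sum. -/
noncomputable def Tln (s : ℝ) (N : ℕ) (c q : ℝ) : ℝ :=
  ∑' i : ℕ, Real.log ((1 - c * q ^ (s + (N : ℝ) + 1) * q ^ i)
    * (1 - q ^ ((N : ℝ) + 1 - s) / c * q ^ i))

/-- The head finite product. -/
noncomputable def GG (s : ℝ) (N : ℕ) (c q : ℝ) : ℝ :=
  ∏ i ∈ Finset.range N, ((1 - c * q ^ (s + (i : ℝ) + 1)) * (1 - q ^ ((i : ℝ) + 1 - s) / c))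

/-- Splitting of theta at `c q^s` into prefactor, head and tail. -/
lemma theta_split {c q s : ℝ} (N : ℕ) (hc : 0 < c) (hq : 0 < q) (hq1 : q < 1)
    (hD : c * q ^ (s + (N : ℝ) + 1) ≤ 1/2) (hE : q ^ ((N : ℝ) + 1 - s) / c ≤ 1/2) :
    theta q (c * q ^ s)
      = (Real.sqrt (c * q ^ s) - (Real.sqrt (c * q ^ s))⁻¹)
        * (GG s N c q * Real.exp (Tln s N c q)) := by
  have hD0 : 0 ≤ c * q ^ (s + (N : ℝ) + 1) := by positivity
  have hE0 : 0 ≤ q ^ ((N : ℝ) + 1 - s) / c := by positivity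
  have htail := aux_tail_hasProd (D := c * q ^ (s + (N : ℝ) + 1))
    (E := q ^ ((N : ℝ) + 1 - s) / c) hq hq1 hD0 hE0 hD hE
  set f : ℕ → ℝ := fun i : ℕ => (1 - c * q ^ s * q ^ (i + 1)) * (1 - q ^ (i + 1) / (c * q ^ s))
    with hf
  have htail' : HasProd (fun i : ℕ => f (i + N)) (Real.exp (Tln s N c q)) := by
    refine htail.congr_fun fun i => ?_
    rw [hf]
    exact aux_fac_shift hc hq i N
  have hfull : HasProd f ((∏ i ∈ Finset.range N, f i) * Real.exp (Tln s N c q)) :=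
    htail'.prod_range_mul
  have hGG : (∏ i ∈ Finset.range N, f i) = GG s N c q := by
    refine Finset.prod_congr rfl fun i _ => ?_
    have := aux_fac_shift (s := s) hc hq 0 i
    rw [hf]
    simpa using this
  rw [hGG] at hfull
  rw [theta, hfull.tprod_eq]

/-- The tail tends to 1. -/
lemma tendsto_exp_Tln {c s : ℝ} (N : ℕ) (hc : 0 < c) (hsN : |s| ≤ (N : ℝ)) :
    Tendsto (fun q => Real.exp (Tln s N c q)) (𝓝[>] 0) (𝓝 1) := by
  have he1 : (0:ℝ) < s + (N : ℝ) + 1 := by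
    have := abs_le.mp hsN
    linarith [this.1]
  have he2 : (0:ℝ) < (N : ℝ) + 1 - s := by
    have := abs_le.mp hsN
    linarith [this.2]
  have hDt : Tendsto (fun q : ℝ => c * q ^ (s + (N : ℝ) + 1)) (𝓝[>] 0) (𝓝 0) := by
    simpa using (aux_rpow_zero he1).const_mul c
  have hEt : Tendsto (fun q : ℝ => q ^ ((N : ℝ) + 1 - s) / c) (𝓝[>] 0) (𝓝 0) := by
    simpa using (aux_rpow_zero he2).div_const c
  have hS : Tendsto (fun q => Tln s N c q) (𝓝[>] 0) (𝓝 0) := by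
    apply squeeze_zero_norm'
      (a := fun q => (2 * (c * q ^ (s + (N : ℝ) + 1)) + 2 * (q ^ ((N : ℝ) + 1 - s) / c)) * 2)
    · filter_upwards [self_mem_nhdsWithin,
        eventually_nhdsWithin_of_eventually_nhds (eventually_lt_nhds (by norm_num : (0:ℝ) < 1/2)),
        hDt.eventually_le_const (by norm_num : (0:ℝ) < 1/2),
        hEt.eventually_le_const (by norm_num : (0:ℝ) < 1/2)] with q hq hq2 hDq hEq
      · have hq0 : (0:ℝ) < q := hq
        have hb := aux_tail_tsum_bound (q := q) hq0 (by linarith) (by positivity) (by positivity)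
          hDq hEq
        rw [Real.norm_eq_abs]
        refine le_trans hb ?_
        rw [div_le_iff₀ (by linarith)]
        have h0 : (0:ℝ) ≤ 2 * (c * q ^ (s + (N : ℝ) + 1)) + 2 * (q ^ ((N : ℝ) + 1 - s) / c) := by
          positivity
        nlinarith
    · have := ((hDt.const_mul 2).add (hEt.const_mul 2)).mul_const 2
      simpa using this
  have := (Real.continuous_exp.tendsto 0).comp hS
  simpa [Function.comp_def] using this

/-- Prefactor ratio identity. -/
lemma aux_pre_ratio {x y : ℝ} (hx : 0 < x) (hy : 0 < y) (hy1 : y ≠ 1) :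
    (Real.sqrt (x * y) - (Real.sqrt (x * y))⁻¹) / (Real.sqrt y - (Real.sqrt y)⁻¹)
      = (Real.sqrt x * y - (Real.sqrt x)⁻¹) / (y - 1) := by
  have hsx : (0:ℝ) < Real.sqrt x := Real.sqrt_pos.mpr hx
  have hsy : (0:ℝ) < Real.sqrt y := Real.sqrt_pos.mpr hy
  have hsy1 : Real.sqrt y ^ 2 = y := Real.sq_sqrt hy.le
  have hsx1 : Real.sqrt x ^ 2 = x := Real.sq_sqrt hx.le
  have hxy : Real.sqrt (x * y) = Real.sqrt x * Real.sqrt y := Real.sqrt_mul hx.le y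
  have hden : Real.sqrt y - (Real.sqrt y)⁻¹ ≠ 0 := by
    rw [sub_ne_zero]
    intro h
    apply hy1
    calc y = Real.sqrt y * Real.sqrt y := (Real.mul_self_sqrt hy.le).symm
    _ = Real.sqrt y * (Real.sqrt y)⁻¹ := by nth_rewrite 2 [h]; rfl
    _ = 1 := mul_inv_cancel₀ hsy.ne'
  have hy1' : y - 1 ≠ 0 := sub_ne_zero.mpr hy1
  rw [hxy, div_eq_div_iff hden hy1']
  have key : ∀ a b yy : ℝ, a ≠ 0 → b ≠ 0 → b^2 = yy →
      (a*b - (a*b)⁻¹)*(yy-1) = (a*yy - a⁻¹)*(b-b⁻¹) := by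
    intro a b yy ha hb hyy
    subst hyy
    field_simp
  exact key _ _ _ hsx.ne' hsy.ne' hsy1

/-- Single factor ratio limit. -/
lemma aux_factor_ratio {x z e f : ℝ} (hx : 0 < x) (hz : 0 < z) (he : e ≠ 0) (hf : f ≠ 0) :
    Tendsto (fun q : ℝ =>
        ((1 - x * z * q ^ e) * (1 - q ^ f / (x * z))) / ((1 - z * q ^ e) * (1 - q ^ f / z)))
      (𝓝[>] 0)
      (𝓝 ((if e < 0 then x else 1) * (if f < 0 then x⁻¹ else 1))) := by
  have heq : ∀ q : ℝ,
      ((1 - x * z * q ^ e) * (1 - q ^ f / (x * z))) / ((1 - z * q ^ e) * (1 - q ^ f / z))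
      = ((1 - x * z * q ^ e) / (1 - z * q ^ e))
        * ((1 - (x * z)⁻¹ * q ^ f) / (1 - z⁻¹ * q ^ f)) := by
    intro q
    rw [div_mul_div_comm]
    congr 2 <;> rw [div_eq_inv_mul]
  have h1 : Tendsto (fun q : ℝ => (1 - x * z * q ^ e) / (1 - z * q ^ e)) (𝓝[>] 0)
      (𝓝 (if e < 0 then x else 1)) := by
    rcases lt_or_gt_of_ne he with h | h
    · rw [if_pos h]
      have := aux_ratio_neg (a := x * z) (b := z) h hz.ne'
      rwa [mul_div_assoc, div_self hz.ne', mul_one] at this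
    · rw [if_neg (not_lt.mpr h.le)]
      exact aux_ratio_pos h
  have h2 : Tendsto (fun q : ℝ => (1 - (x * z)⁻¹ * q ^ f) / (1 - z⁻¹ * q ^ f)) (𝓝[>] 0)
      (𝓝 (if f < 0 then x⁻¹ else 1)) := by
    rcases lt_or_gt_of_ne hf with h | h
    · rw [if_pos h]
      have := aux_ratio_neg (a := (x * z)⁻¹) (b := z⁻¹) h (by positivity)
      have he2 : (x * z)⁻¹ / z⁻¹ = x⁻¹ := by
        field_simp
      rwa [he2] at this
    · rw [if_neg (not_lt.mpr h.le)]
      exact aux_ratio_pos h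
  have := h1.mul h2
  refine this.congr fun q => (heq q).symm

/-- Product of an if-indicator. -/
lemma aux_prod_if {v : ℝ} {m N : ℕ} (h : m ≤ N) :
    ∏ i ∈ Finset.range N, (if i < m then v else 1) = v ^ m := by
  rw [← Finset.prod_range_mul_prod_Ico _ h]
  have h1 : ∏ i ∈ Finset.range m, (if i < m then v else 1) = v ^ m := by
    rw [Finset.prod_congr rfl (fun i hi => if_pos (Finset.mem_range.mp hi)),
      Finset.prod_const, Finset.card_range]
  have h2 : ∏ i ∈ Finset.Ico m N, (if i < m then v else 1) = 1 :=
    Finset.prod_eq_one fun i hi => if_neg (not_lt.mpr (Finset.mem_Ico.mp hi).1)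
  rw [h1, h2, mul_one]

/-- For `x, z > 0` and non-integral real `s`,
`lim_{q → 0⁺} ϑ_q(x z q^s) / ϑ_q(z q^s) = x^{-(⌊s⌋ + 1/2)}`. -/
theorem stmt6 (x z s : ℝ) (hx : 0 < x) (hz : 0 < z) (hs : ¬∃ n : ℤ, s = (n : ℝ)) :
    Tendsto (fun q : ℝ => theta q (x * z * q ^ s) / theta q (z * q ^ s)) (𝓝[>] 0)
      (𝓝 (x ^ (-((⌊s⌋ : ℝ) + 1 / 2)))) := by
  have hsne : ∀ m : ℤ, s ≠ (m : ℝ) := fun m h => hs ⟨m, h⟩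
  set n : ℤ := ⌊s⌋ with hn
  set N : ℕ := ⌈|s|⌉₊ with hN
  have hsN : |s| ≤ (N : ℝ) := Nat.le_ceil _
  have hsabs := abs_le.mp hsN
  have hxz : 0 < x * z := mul_pos hx hz
  have hs0 : s ≠ 0 := fun h => hsne 0 (by exact_mod_cast h)
  have he1 : (0:ℝ) < s + (N : ℝ) + 1 := by linarith [hsabs.1]
  have he2 : (0:ℝ) < (N : ℝ) + 1 - s := by linarith [hsabs.2]
  -- tail limits
  have hTx := tendsto_exp_Tln (c := x * z) (s := s) N hxz hsN
  have hTz := tendsto_exp_Tln (c := z) (s := s) N hz hsN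
  have hTr : Tendsto (fun q => Real.exp (Tln s N (x*z) q) / Real.exp (Tln s N z q))
      (𝓝[>] 0) (𝓝 1) := by
    have := hTx.div hTz one_ne_zero
    simpa [Pi.div_def] using this
  -- splitting eventually
  have hsplit : ∀ c : ℝ, 0 < c → ∀ᶠ q in 𝓝[>] (0:ℝ),
      theta q (c * q ^ s) = (Real.sqrt (c * q ^ s) - (Real.sqrt (c * q ^ s))⁻¹)
        * (GG s N c q * Real.exp (Tln s N c q)) := by
    intro c hc
    have hDt : Tendsto (fun q : ℝ => c * q ^ (s + (N : ℝ) + 1)) (𝓝[>] 0) (𝓝 0) := by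
      simpa using (aux_rpow_zero he1).const_mul c
    have hEt : Tendsto (fun q : ℝ => q ^ ((N : ℝ) + 1 - s) / c) (𝓝[>] 0) (𝓝 0) := by
      simpa using (aux_rpow_zero he2).div_const c
    filter_upwards [self_mem_nhdsWithin,
      eventually_nhdsWithin_of_eventually_nhds (eventually_lt_nhds one_pos),
      hDt.eventually_le_const (by norm_num : (0:ℝ) < 1/2),
      hEt.eventually_le_const (by norm_num : (0:ℝ) < 1/2)] with q hq hq1 hD hE
    exact theta_split N hc hq hq1 hD hE
  -- G ratio limit
  set L2 : ℝ := ∏ i ∈ Finset.range N,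
    ((if s + (i : ℝ) + 1 < 0 then x else 1) * (if (i : ℝ) + 1 - s < 0 then x⁻¹ else 1))
    with hL2
  have hGr : Tendsto (fun q => GG s N (x*z) q / GG s N z q) (𝓝[>] 0) (𝓝 L2) := by
    have heq : ∀ q : ℝ, GG s N (x*z) q / GG s N z q
        = ∏ i ∈ Finset.range N,
          (((1 - x * z * q ^ (s + (i : ℝ) + 1)) * (1 - q ^ ((i : ℝ) + 1 - s) / (x * z)))
            / ((1 - z * q ^ (s + (i : ℝ) + 1)) * (1 - q ^ ((i : ℝ) + 1 - s) / z))) := by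
      intro q
      rw [GG, GG, ← Finset.prod_div_distrib]
    have hlim : Tendsto (fun q : ℝ => ∏ i ∈ Finset.range N,
        (((1 - x * z * q ^ (s + (i : ℝ) + 1)) * (1 - q ^ ((i : ℝ) + 1 - s) / (x * z)))
          / ((1 - z * q ^ (s + (i : ℝ) + 1)) * (1 - q ^ ((i : ℝ) + 1 - s) / z))))
        (𝓝[>] 0) (𝓝 L2) := by
      rw [hL2]
      apply tendsto_finset_prod
      intro i _
      have hei : s + (i : ℝ) + 1 ≠ 0 := by
        intro h
        exact hsne (-(i+1)) (by push_cast; linarith)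
      have hfi : (i : ℝ) + 1 - s ≠ 0 := by
        intro h
        exact hsne (i+1) (by push_cast; linarith)
      exact aux_factor_ratio hx hz hei hfi
    exact hlim.congr fun q => (heq q).symm
  -- key eventual identity
  have hkey : (fun q : ℝ => theta q (x * z * q ^ s) / theta q (z * q ^ s))
      =ᶠ[𝓝[>] (0:ℝ)] fun q : ℝ =>
       ((Real.sqrt (x * (z * q ^ s)) - (Real.sqrt (x * (z * q ^ s)))⁻¹)
          / (Real.sqrt (z * q ^ s) - (Real.sqrt (z * q ^ s))⁻¹))
        * ((GG s N (x*z) q / GG s N z q)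
          * (Real.exp (Tln s N (x*z) q) / Real.exp (Tln s N z q))) := by
    filter_upwards [hsplit (x*z) hxz, hsplit z hz] with q h1 h2
    have hassoc : x * z * q ^ s = x * (z * q ^ s) := by ring
    rw [show theta q (x * z * q ^ s) = theta q ((x*z) * q ^ s) from rfl, h1, h2,
      div_mul_div_comm, div_mul_div_comm, hassoc]
  rcases lt_or_gt_of_ne hs0 with hneg | hpos
  · -- s < 0
    have hn_neg : n < 0 := by
      have h1 : (n : ℝ) ≤ s := Int.floor_le s
      have : (n : ℝ) < 0 := lt_of_le_of_lt h1 hneg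
      exact_mod_cast this
    set m : ℕ := (-n - 1).toNat with hm
    have hm_int : (m : ℤ) = -n - 1 := Int.toNat_of_nonneg (by omega)
    have hm_coe : (m : ℝ) = -(n : ℝ) - 1 := by exact_mod_cast congrArg (Int.cast : ℤ → ℝ) hm_int
    have hsn1 : s < (n : ℝ) + 1 := by exact_mod_cast Int.lt_floor_add_one s
    have hm_le_N : m ≤ N := by
      have : (m : ℝ) ≤ (N : ℝ) := by
        rw [hm_coe]
        have := neg_le_abs s
        linarith
      exact_mod_cast this
    have hL2val : L2 = x ^ m := by
      rw [hL2, ← aux_prod_if (v := x) hm_le_N]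
      refine Finset.prod_congr rfl fun i _ => ?_
      have hi0 : (0:ℝ) ≤ (i : ℝ) := Nat.cast_nonneg i
      rw [if_neg (by push_cast; linarith : ¬((i : ℝ) + 1 - s < 0)), mul_one]
      have hiff : (s + (i : ℝ) + 1 < 0) ↔ (i < m) := by
        constructor
        · intro h
          have h2 : n < -(i : ℤ) - 1 := by
            apply Int.floor_lt.mpr
            push_cast
            linarith
          omega
        · intro h
          have h2 : (i : ℤ) ≤ -n - 2 := by omega
          have h3 : (i : ℝ) ≤ -(n : ℝ) - 2 := by exact_mod_cast h2
          linarith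
      exact if_congr hiff rfl rfl
    have hyT : Tendsto (fun q : ℝ => z * q ^ s) (𝓝[>] 0) atTop :=
      Tendsto.const_mul_atTop hz (aux_rpow_atTop hneg)
    have hinv : Tendsto (fun q : ℝ => (z * q ^ s)⁻¹) (𝓝[>] 0) (𝓝 0) :=
      hyT.inv_tendsto_atTop
    have hh : Tendsto (fun q : ℝ =>
        (Real.sqrt x - (Real.sqrt x)⁻¹ * (z * q ^ s)⁻¹) / (1 - (z * q ^ s)⁻¹))
        (𝓝[>] 0) (𝓝 (Real.sqrt x)) := by
      have := Tendsto.div ((hinv.const_mul ((Real.sqrt x)⁻¹)).const_sub (Real.sqrt x))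
        (hinv.const_sub 1) (by norm_num : (1:ℝ) - 0 ≠ 0)
      simpa [Pi.div_def] using this
    have hpre : Tendsto (fun q : ℝ =>
        (Real.sqrt (x * (z * q ^ s)) - (Real.sqrt (x * (z * q ^ s)))⁻¹)
          / (Real.sqrt (z * q ^ s) - (Real.sqrt (z * q ^ s))⁻¹))
        (𝓝[>] 0) (𝓝 (Real.sqrt x)) := by
      refine Tendsto.congr' ?_ hh
      filter_upwards [self_mem_nhdsWithin, hyT.eventually_gt_atTop 1] with q hq h1
      have hy : (0:ℝ) < z * q ^ s := mul_pos hz (Real.rpow_pos_of_pos hq s)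
      rw [aux_pre_ratio hx hy (by linarith : z * q ^ s ≠ 1)]
      have h0 : z * q ^ s ≠ 0 := hy.ne'
      have hm1 : z * q ^ s - 1 ≠ 0 := by
        intro hcon; apply absurd h1; rw [show z * q ^ s = 1 by linarith]; simp
      have hm2 : 1 - (z * q ^ s)⁻¹ ≠ 0 := by
        rw [sub_ne_zero]
        intro hcon
        have : z * q ^ s = 1 := by
          rw [← inv_inv (z * q ^ s), ← hcon, inv_one]
        linarith
      rw [div_eq_div_iff hm2 hm1]
      have key : ∀ a y : ℝ, a ≠ 0 → y ≠ 0 →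
          (a - a⁻¹ * y⁻¹) * (y - 1) = (a * y - a⁻¹) * (1 - y⁻¹) := by
        intro a y ha hy
        linear_combination (a - a⁻¹) * mul_inv_cancel₀ hy
      exact key _ _ (Real.sqrt_pos.mpr hx).ne' h0
    have hval : Real.sqrt x * (L2 * 1) = x ^ (-((n : ℝ) + 1/2)) := by
      rw [hL2val, mul_one]
      have hexp : -((n : ℝ) + 1/2) = (m : ℝ) + 1/2 := by rw [hm_coe]; ring
      rw [hexp, Real.rpow_add hx, Real.rpow_natCast, ← Real.sqrt_eq_rpow, mul_comm]
    rw [← hval]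
    exact Tendsto.congr' hkey.symm (hpre.mul (hGr.mul hTr))
  · -- 0 < s
    have hn_nonneg : 0 ≤ n := Int.floor_nonneg.mpr hpos.le
    set m : ℕ := n.toNat with hm
    have hm_int : (m : ℤ) = n := Int.toNat_of_nonneg hn_nonneg
    have hm_coe : (m : ℝ) = (n : ℝ) := by exact_mod_cast congrArg (Int.cast : ℤ → ℝ) hm_int
    have hns : (n : ℝ) < s := lt_of_le_of_ne (Int.floor_le s) (Ne.symm (hsne n))
    have hm_le_N : m ≤ N := by
      have : (m : ℝ) ≤ (N : ℝ) := by
        rw [hm_coe]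
        have := le_abs_self s
        linarith
      exact_mod_cast this
    have hL2val : L2 = x⁻¹ ^ m := by
      rw [hL2, ← aux_prod_if (v := x⁻¹) hm_le_N]
      refine Finset.prod_congr rfl fun i _ => ?_
      have hi0 : (0:ℝ) ≤ (i : ℝ) := Nat.cast_nonneg i
      rw [if_neg (by push_cast; linarith : ¬(s + (i : ℝ) + 1 < 0)), one_mul]
      have hiff : ((i : ℝ) + 1 - s < 0) ↔ (i < m) := by
        constructor
        · intro h
          have h2 : (i : ℤ) + 1 ≤ n := by
            apply Int.le_floor.mpr
            push_cast
            linarith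
          omega
        · intro h
          have h2 : (i : ℤ) + 1 ≤ n := by omega
          have h3 : (i : ℝ) + 1 ≤ (n : ℝ) := by exact_mod_cast h2
          linarith
      exact if_congr hiff rfl rfl
    have hy0 : Tendsto (fun q : ℝ => z * q ^ s) (𝓝[>] 0) (𝓝 0) := by
      simpa using (aux_rpow_zero hpos).const_mul z
    have hh : Tendsto (fun q : ℝ =>
        (Real.sqrt x * (z * q ^ s) - (Real.sqrt x)⁻¹) / ((z * q ^ s) - 1))
        (𝓝[>] 0) (𝓝 ((Real.sqrt x)⁻¹)) := by
      have := Tendsto.div ((hy0.const_mul (Real.sqrt x)).sub_const ((Real.sqrt x)⁻¹))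
        (hy0.sub_const 1) (by norm_num : (0:ℝ) - 1 ≠ 0)
      have hvv : (Real.sqrt x * 0 - (Real.sqrt x)⁻¹) / ((0:ℝ) - 1) = (Real.sqrt x)⁻¹ := by
        norm_num
      rwa [hvv] at this
    have hpre : Tendsto (fun q : ℝ =>
        (Real.sqrt (x * (z * q ^ s)) - (Real.sqrt (x * (z * q ^ s)))⁻¹)
          / (Real.sqrt (z * q ^ s) - (Real.sqrt (z * q ^ s))⁻¹))
        (𝓝[>] 0) (𝓝 ((Real.sqrt x)⁻¹)) := by
      refine Tendsto.congr' ?_ hh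
      filter_upwards [self_mem_nhdsWithin,
        hy0.eventually_lt_const (by norm_num : (0:ℝ) < 1)] with q hq h1
      have hy : (0:ℝ) < z * q ^ s := mul_pos hz (Real.rpow_pos_of_pos hq s)
      rw [aux_pre_ratio hx hy (ne_of_lt h1)]
    have hval : (Real.sqrt x)⁻¹ * (L2 * 1) = x ^ (-((n : ℝ) + 1/2)) := by
      rw [hL2val, mul_one]
      have hexp : -((n : ℝ) + 1/2) = -(m : ℝ) + -(1/2) := by rw [hm_coe]; ring
      rw [hexp, Real.rpow_add hx, Real.rpow_neg hx.le, Real.rpow_natCast, inv_pow,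
        Real.rpow_neg hx.le, ← Real.sqrt_eq_rpow, mul_comm]
    rw [← hval]
    exact Tendsto.congr' hkey.symm (hpre.mul (hGr.mul hTr))
end

section
/- Let F be a field, V a finite-dimensional F-vector space, L : V → V an invertible F-linear map, and t transcendental over F. Let M(z) = L + Σ_{d≥1} A_d z^d be a formal power series with coefficients A_d ∈ End(V) ⊗_F F(t) (the constant term L is t-independent). Then there exists a unique formal power series Ψ(z) = 1 + Σ_{d≥1} Ψ_d z^d with Ψ_d ∈ End(V) ⊗_F F(t) satisfying the functional equation Ψ(t·z) ∘ L = M(z) ∘ Ψ(z), where Ψ(t·z) = 1 + Σ_{d≥1} Ψ_d t^d z^d. -/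
open TensorProduct

section Aux

open Polynomial
set_option synthInstance.maxHeartbeats 1000000
set_option maxHeartbeats 1000000
set_option maxRecDepth 40000
set_option linter.unusedSectionVars false

variable {F : Type*} [Field F] {V : Type*} [AddCommGroup V] [Module F V]
    [FiniteDimensional F V]

theorem transXpow {d : ℕ} (hd : 0 < d) : Transcendental F ((RatFunc.X : RatFunc F) ^ d) := by
  refine Transcendental.pow ?_ hd
  rw [RatFunc.X]
  exact (transcendental_algebraMap_iff (IsFractionRing.injective _ _)).mpr
    (Polynomial.transcendental_X F)

theorem keyUnit (L : V →ₗ[F] V) (hL : Function.Bijective L) {d : ℕ} (hd : 0 < d) :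
    IsUnit (Polynomial.aeval (((RatFunc.X : RatFunc F) ^ d) • (L.baseChange (RatFunc F)))
      L.charpoly : Module.End (RatFunc F) (RatFunc F ⊗[F] V)) := by
  set K := RatFunc F
  set t : K := RatFunc.X ^ d with ht
  set B := L.baseChange K with hB
  set p := L.charpoly with hp
  set b : Module.Basis _ F V := Module.finBasis F V with hb
  set b' : Module.Basis _ K (K ⊗[F] V) := Algebra.TensorProduct.basis K b with hb'
  set A : Matrix _ _ F := LinearMap.toMatrix b b L with hA
  set e := LinearMap.toMatrixAlgEquiv b' with he
  have step1 : e (Polynomial.aeval (t • B) p)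
      = Polynomial.aeval (t • A.map (algebraMap F K)) p := by
    have h1 : e (t • B) = t • A.map (algebraMap F K) := by
      rw [map_smul]
      congr 1
      show LinearMap.toMatrix b' b' B = _
      rw [hb', hA, hB, LinearMap.toMatrix_baseChange]
    rw [← h1]
    exact (Polynomial.aeval_algHom_apply (e.toAlgHom.restrictScalars F) (t • B) p).symm
  set ψ : F[X] →ₐ[F] K := Polynomial.aeval (t : K) with hψ
  set G : Matrix _ _ F[X] :=
    Polynomial.aeval ((Polynomial.X : F[X]) • A.map (algebraMap F F[X])) p with hG
  have hMG : ψ.mapMatrix G = Polynomial.aeval (t • A.map (algebraMap F K)) p := by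
    rw [hG, ← Polynomial.aeval_algHom_apply ψ.mapMatrix]
    congr 1
    ext i j
    simp only [AlgHom.mapMatrix_apply, Matrix.map_apply, Matrix.smul_apply, smul_eq_mul,
      map_mul, hψ, Polynomial.aeval_X, AlgHom.commutes, mul_comm]
  have step2 : (Polynomial.aeval (t • A.map (algebraMap F K)) p).det = ψ G.det := by
    rw [AlgHom.map_det, hMG]
  have hdetG : G.det ≠ 0 := by
    intro h0
    have h1 : (Polynomial.aeval (0 : F)) G.det = 0 := by rw [h0, map_zero]
    rw [AlgHom.map_det, hG, ← Polynomial.aeval_algHom_apply] at h1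
    have hz : (Polynomial.aeval (0 : F)).mapMatrix
        ((Polynomial.X : F[X]) • A.map (algebraMap F F[X])) = 0 := by
      ext i j
      simp [Matrix.smul_apply]
    rw [hz] at h1
    rw [show ((Polynomial.aeval (0 : Matrix _ _ F)) p) = algebraMap F _ (p.coeff 0) from
      by rw [Polynomial.aeval_def, Polynomial.eval₂_at_zero]] at h1
    have hc : p.coeff 0 ≠ 0 := by
      have hdet : A.det ≠ 0 := by
        rw [hA, LinearMap.det_toMatrix]
        exact isUnit_iff_ne_zero.mp (L.isUnit_det ((Module.End.isUnit_iff L).mpr hL))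
      intro hc0
      rw [Matrix.det_eq_sign_charpoly_coeff, LinearMap.charpoly_toMatrix, ← hp, hc0,
        mul_zero] at hdet
      exact hdet rfl
    apply hc
    have : (algebraMap F (Matrix (Fin (Module.finrank F V)) (Fin (Module.finrank F V)) F) (p.coeff 0)).det = (p.coeff 0) ^ (Module.finrank F V) := by
      rw [Matrix.algebraMap_eq_diagonal, Matrix.det_diagonal]
      simp [Finset.prod_const]
    rw [this] at h1
    rcases Nat.eq_zero_or_pos (Module.finrank F V) with hn | hn
    · rw [hn, pow_zero] at h1
      exact absurd h1 one_ne_zero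
    · exact (pow_eq_zero_iff hn.ne').mp h1
  have hψdetG : ψ G.det ≠ 0 := fun h0 => transXpow hd ⟨G.det, hdetG, h0⟩
  have : IsUnit (e (Polynomial.aeval (t • B) p)) := by
    rw [step1, Matrix.isUnit_iff_isUnit_det, isUnit_iff_ne_zero, step2]
    exact hψdetG
  have h2 := this.map e.symm
  rwa [AlgEquiv.symm_apply_apply] at h2

theorem sylvester (L : V →ₗ[F] V) (hL : Function.Bijective L) {d : ℕ} (hd : 0 < d)
    (C : RatFunc F ⊗[F] V →ₗ[RatFunc F] RatFunc F ⊗[F] V) :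
    ∃! X : RatFunc F ⊗[F] V →ₗ[RatFunc F] RatFunc F ⊗[F] V,
      ((RatFunc.X : RatFunc F) ^ d) • (X ∘ₗ L.baseChange (RatFunc F))
        = L.baseChange (RatFunc F) ∘ₗ X + C := by
  set K := RatFunc F
  set s : K := RatFunc.X ^ d with hs
  set B := L.baseChange K with hB
  set T : (K ⊗[F] V →ₗ[K] K ⊗[F] V) →ₗ[K] (K ⊗[F] V →ₗ[K] K ⊗[F] V) :=
    { toFun := fun X => s • (X * B) - B * X
      map_add' := fun X Y => by
        simp only [add_mul, mul_add, smul_add]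
        abel
      map_smul' := fun c X => by
        simp only [RingHom.id_apply, smul_sub, smul_mul_assoc, mul_smul_comm, smul_comm s c]
    } with hT
  have hinj : Function.Injective T := by
    rw [injective_iff_map_eq_zero]
    intro X hX
    have h : s • (X * B) = B * X := by
      have := sub_eq_zero.mp hX
      exact this
    have h1 : ∀ n : ℕ, B ^ n * X = X * (s • B) ^ n := by
      intro n
      induction n with
      | zero => simp
      | succ n ih =>
        calc B ^ (n+1) * X = B * (B ^ n * X) := by rw [pow_succ', mul_assoc]
          _ = B * (X * (s • B) ^ n) := by rw [ih]
          _ = (B * X) * (s • B) ^ n := by rw [mul_assoc]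
          _ = (s • (X * B)) * (s • B) ^ n := by rw [h]
          _ = X * (s • B) ^ (n+1) := by rw [← mul_smul_comm, mul_assoc, ← pow_succ']
    have h2 : (Polynomial.aeval B B.charpoly) * X = X * (Polynomial.aeval (s • B) B.charpoly) := by
      rw [Polynomial.aeval_eq_sum_range (R := K), Polynomial.aeval_eq_sum_range (R := K),
        Finset.sum_mul, Finset.mul_sum]
      refine Finset.sum_congr rfl fun i _ => ?_
      rw [smul_mul_assoc, mul_smul_comm, h1]
    rw [LinearMap.aeval_self_charpoly, zero_mul] at h2
    have hq2 : Polynomial.aeval (s • B) B.charpoly = Polynomial.aeval (s • B) L.charpoly := by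
      rw [hB, LinearMap.charpoly_baseChange, Polynomial.aeval_map_algebraMap]
    rw [hq2] at h2
    have hU := keyUnit L hL (F := F) hd
    calc X = X * (↑hU.unit * ↑hU.unit⁻¹) := by rw [Units.mul_inv, mul_one]
      _ = (X * ↑hU.unit) * ↑hU.unit⁻¹ := by rw [mul_assoc]
      _ = 0 := by rw [hU.unit_spec, ← h2, zero_mul]
  have hsurj : Function.Surjective T := LinearMap.injective_iff_surjective.mp hinj
  obtain ⟨X, hXeq⟩ := hsurj C
  refine ⟨X, ?_, ?_⟩
  · show s • (X ∘ₗ B) = B ∘ₗ X + C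
    rw [← Module.End.mul_eq_comp, ← Module.End.mul_eq_comp]
    have h' : s • (X * B) - B * X = C := hXeq
    rw [← h']
    abel
  · intro Y hY
    refine hinj ?_
    have hTY : T Y = C := by
      show s • (Y * B) - B * Y = C
      rw [Module.End.mul_eq_comp, Module.End.mul_eq_comp, hY]
      abel
    exact hTY.trans hXeq.symm

theorem existsUnique_recSeq {α : Type*} (step : (d : ℕ) → ((m : ℕ) → m < d → α) → α) :
    ∃! f : ℕ → α, ∀ d, f d = step d (fun m _ => f m) := by
  have wf : WellFounded ((· < ·) : ℕ → ℕ → Prop) := Nat.lt_wfRel.wf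
  refine ⟨fun d => wf.fix step d, fun d => ?_, ?_⟩
  · exact wf.fix_eq step d
  · intro g hg
    funext d
    induction d using Nat.strong_induction_on with
    | _ d ih =>
      rw [hg d, wf.fix_eq step d]
      congr 1
      funext m hm
      exact ih m hm

theorem sumsplit (L : V →ₗ[F] V)
    (M : ℕ → (RatFunc F ⊗[F] V →ₗ[RatFunc F] RatFunc F ⊗[F] V))
    (hM0 : M 0 = L.baseChange (RatFunc F))
    (Ψ : ℕ → (RatFunc F ⊗[F] V →ₗ[RatFunc F] RatFunc F ⊗[F] V)) (d : ℕ) :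
    ∑ p ∈ Finset.HasAntidiagonal.antidiagonal d, M p.1 ∘ₗ Ψ p.2
      = L.baseChange (RatFunc F) ∘ₗ Ψ d + ∑ f ∈ Finset.range d, M (d - f) ∘ₗ Ψ f := by
  rw [Finset.Nat.sum_antidiagonal_eq_sum_range_succ_mk, Finset.sum_range_succ']
  rw [Nat.sub_zero, hM0, add_comm]
  congr 1
  rw [← Finset.sum_range_reflect]
  refine Finset.sum_congr rfl fun j hj => ?_
  have hjd := Finset.mem_range.mp hj
  have e1 : d - 1 - j + 1 = d - j := by omega
  show M (d - 1 - j + 1) ∘ₗ Ψ (d - (d - 1 - j + 1)) = M (d - j) ∘ₗ Ψ j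
  rw [e1, show d - (d - j) = j by omega]

theorem stmt8aux (L : V →ₗ[F] V) (hL : Function.Bijective L)
    (M : ℕ → (RatFunc F ⊗[F] V →ₗ[RatFunc F] RatFunc F ⊗[F] V))
    (hM0 : M 0 = L.baseChange (RatFunc F)) :
    ∃! Ψ : ℕ → (RatFunc F ⊗[F] V →ₗ[RatFunc F] RatFunc F ⊗[F] V),
      Ψ 0 = LinearMap.id ∧
      ∀ d : ℕ, ((RatFunc.X : RatFunc F) ^ d) • (Ψ d ∘ₗ L.baseChange (RatFunc F))
        = ∑ p ∈ Finset.HasAntidiagonal.antidiagonal d, M p.1 ∘ₗ Ψ p.2 := by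
  classical
  set step : (d : ℕ) → ((m : ℕ) → m < d → (RatFunc F ⊗[F] V →ₗ[RatFunc F] RatFunc F ⊗[F] V)) →
      (RatFunc F ⊗[F] V →ₗ[RatFunc F] RatFunc F ⊗[F] V) :=
    fun d ih => if h : d = 0 then LinearMap.id else
      (sylvester L hL (Nat.pos_of_ne_zero h)
        (∑ x ∈ (Finset.range d).attach,
          M (d - x.1) ∘ₗ ih x.1 (Finset.mem_range.mp x.2))).exists.choose with hstep
  obtain ⟨f, hf, hfu⟩ := existsUnique_recSeq step
  have hstep0 : ∀ ih, step 0 ih = LinearMap.id := fun ih => by rw [hstep]; simp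
  refine ⟨f, ⟨?_, ?_⟩, ?_⟩
  · exact (hf 0).trans (hstep0 (fun m _ => f m))
  · intro d
    rcases Nat.eq_zero_or_pos d with rfl | hd
    · have h0 : f 0 = LinearMap.id := (hf 0).trans (hstep0 (fun m _ => f m))
      simp [hM0, h0]
    · have hd' : d ≠ 0 := hd.ne'
      rw [sumsplit L M hM0 f d, hf d]
      have hspec := (sylvester L hL (F := F) (Nat.pos_of_ne_zero hd')
        (∑ x ∈ (Finset.range d).attach,
          M (d - x.1) ∘ₗ f x.1)).exists.choose_spec
      rw [hstep]
      simp only [dif_neg hd']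
      rw [← Finset.sum_attach (Finset.range d) (fun x => M (d - x) ∘ₗ f x)]
      exact hspec
  · rintro Ψ ⟨hΨ0, hΨeq⟩
    refine hfu Ψ fun d => ?_
    rcases Nat.eq_zero_or_pos d with rfl | hd
    · rw [hΨ0]
      exact (hstep0 (fun m _ => Ψ m)).symm
    · have hd' : d ≠ 0 := hd.ne'
      have hΨd : ((RatFunc.X : RatFunc F) ^ d) • (Ψ d ∘ₗ L.baseChange (RatFunc F))
          = L.baseChange (RatFunc F) ∘ₗ Ψ d
            + ∑ x ∈ (Finset.range d).attach, M (d - x.1) ∘ₗ Ψ x.1 := by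
        rw [Finset.sum_attach (Finset.range d) (fun x => M (d - x) ∘ₗ Ψ x)]
        rw [← sumsplit L M hM0 Ψ d]
        exact hΨeq d
      have S := sylvester L hL (F := F) (Nat.pos_of_ne_zero hd')
        (∑ x ∈ (Finset.range d).attach, M (d - x.1) ∘ₗ Ψ x.1)
      rw [hstep]
      simp only [dif_neg hd']
      exact S.unique hΨd S.exists.choose_spec

end Aux

/-- Let `F` be a field, `V` a finite-dimensional `F`-vector space, `L : V → V` invertible,
`t = RatFunc.X` transcendental over `F`.  Given a formal power series
`M(z) = L + ∑_{d ≥ 1} A_d z^d` with coefficients in `End(V) ⊗_F F(t)` (encoded by its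
coefficient function `M : ℕ → End`, with `M 0` the base change of `L`), there is a unique
formal power series `Ψ(z) = 1 + ∑_{d ≥ 1} Ψ_d z^d` with `Ψ(t z) ∘ L = M(z) ∘ Ψ(z)`,
i.e. coefficientwise `t^d • (Ψ_d ∘ L) = ∑_{e+f=d} M_e ∘ Ψ_f` for all `d`. -/
theorem stmt8 (F : Type*) [Field F] (V : Type*) [AddCommGroup V] [Module F V]
    [FiniteDimensional F V] (L : V →ₗ[F] V) (hL : Function.Bijective L)
    (M : ℕ → (RatFunc F ⊗[F] V →ₗ[RatFunc F] RatFunc F ⊗[F] V))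
    (hM0 : M 0 = L.baseChange (RatFunc F)) :
    ∃! Ψ : ℕ → (RatFunc F ⊗[F] V →ₗ[RatFunc F] RatFunc F ⊗[F] V),
      Ψ 0 = LinearMap.id ∧
      ∀ d : ℕ, ((RatFunc.X : RatFunc F) ^ d) • (Ψ d ∘ₗ L.baseChange (RatFunc F))
        = ∑ p ∈ Finset.HasAntidiagonal.antidiagonal d, M p.1 ∘ₗ Ψ p.2 := by
  exact stmt8aux L hL M hM0
end
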